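/- Let Q be a real symmetric m×m matrix with positive diagonal, write Q_D = diag(Q), A = Q_D^{-1}(Q - Q_D), and suppose all eigenvalues of A exceed -1 and ρ(A) = max_i |λ_i(A)| < 1. Then det Q ≤ det Q_D, and det Q ≥ exp(-m ρ(A)²/(1 + λ_min(A))) · det Q_D. -/

import Mathlib

open Matrix Finset Real

private lemma il_trace_eq_sum_eigs {m : ℕ} {M : Matrix (Fin m) (Fin m) ℝ}
    (hM : M.IsHermitian) : M.trace = ∑ i, hM.eigenvalues i := by
  simpa using hM.trace_eq_sum_eigenvalues

private lemma il_log_bound (ρ lamMin lam : ℝ) (h1 : lamMin ≤ lam) (h2 : |lam| ≤ ρ)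
    (h3 : -1 < lamMin) : lam - ρ^2/(1+lamMin) ≤ Real.log (1+lam) := by
  have hpos : 0 < 1 + lam := by linarith
  have hminpos : 0 < 1 + lamMin := by linarith
  have hlog : Real.log ((1+lam)⁻¹) ≤ (1+lam)⁻¹ - 1 :=
    Real.log_le_sub_one_of_pos (inv_pos.2 hpos)
  rw [Real.log_inv] at hlog
  have h4 : lam / (1 + lam) ≤ Real.log (1 + lam) := by
    have : 1 - (1+lam)⁻¹ = lam / (1+lam) := by field_simp; ring
    linarith [this ▸ (by linarith : 1 - (1+lam)⁻¹ ≤ Real.log (1+lam))]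
  have h5 : lam^2 / (1+lam) ≤ ρ^2 / (1+lamMin) := by
    apply div_le_div₀ (sq_nonneg ρ) _ hminpos (by linarith)
    have := abs_le.mp h2
    nlinarith [sq_abs lam]
  have h6 : lam - lam^2/(1+lam) = lam / (1+lam) := by field_simp; ring
  linarith

theorem ipsen_lee_determinant_comparison (m : ℕ)
    (Q : Matrix (Fin m) (Fin m) ℝ) (hsymm : Q.IsSymm)
    (hdiag : ∀ i, 0 < Q i i)
    (QD A : Matrix (Fin m) (Fin m) ℝ)
    (hQD : QD = Matrix.diagonal (fun i => Q i i))
    (hA : A = QD⁻¹ * (Q - QD))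
    (ρ lamMin : ℝ)
    (hbounds : ∀ (lam : ℝ) (v : Fin m → ℝ), v ≠ 0 → A.mulVec v = lam • v →
      lamMin ≤ lam ∧ |lam| ≤ ρ)
    (hlamMin : -1 < lamMin) (hρ : ρ < 1) :
    Q.det ≤ QD.det ∧
    Real.exp (-(m : ℝ) * ρ^2 / (1 + lamMin)) * QD.det ≤ Q.det := by
  have hsqrt_pos : ∀ i, 0 < Real.sqrt (Q i i) := fun i => Real.sqrt_pos.2 (hdiag i)
  set t : Fin m → ℝ := fun i => (Real.sqrt (Q i i))⁻¹ with ht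
  set s : Fin m → ℝ := fun i => Real.sqrt (Q i i) with hs
  set T : Matrix (Fin m) (Fin m) ℝ := Matrix.diagonal t with hT
  set S : Matrix (Fin m) (Fin m) ℝ := Matrix.diagonal s with hS
  have hST : S * T = 1 := by
    rw [hS, hT, Matrix.diagonal_mul_diagonal,
      show (fun i => s i * t i) = fun _ => (1 : ℝ) from
        funext fun i => mul_inv_cancel₀ (hsqrt_pos i).ne', Matrix.diagonal_one]
  have hTS : T * S = 1 := by
    rw [hS, hT, Matrix.diagonal_mul_diagonal,
      show (fun i => t i * s i) = fun _ => (1 : ℝ) from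
        funext fun i => inv_mul_cancel₀ (hsqrt_pos i).ne', Matrix.diagonal_one]
  have hTT : T * T = QD⁻¹ := by
    symm
    apply Matrix.inv_eq_left_inv
    rw [hT, hQD, Matrix.diagonal_mul_diagonal, Matrix.diagonal_mul_diagonal,
      show (fun i => t i * t i * Q i i) = fun _ => (1 : ℝ) from funext fun i => ?_,
      Matrix.diagonal_one]
    have h := Real.mul_self_sqrt (hdiag i).le
    have hne := (hdiag i).ne'
    field_simp [ht]
    simp only [ht, inv_pow, Real.sq_sqrt (hdiag i).le]
    exact inv_mul_cancel₀ hne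
  set M : Matrix (Fin m) (Fin m) ℝ := T * Q * T with hMdef
  have hQH : Q.IsHermitian := by
    exact Matrix.isHermitian_iff_isSymm.mpr hsymm
  have hM : M.IsHermitian := by
    rw [Matrix.IsHermitian, hMdef]
    rw [Matrix.conjTranspose_mul, Matrix.conjTranspose_mul, hQH.eq]
    have hTH : Tᴴ = T := by
      rw [hT, Matrix.diagonal_conjTranspose]; simp
    rw [hTH, Matrix.mul_assoc]
  have hQeq : Q = S * M * S := by
    rw [hMdef]
    calc Q = (S * T) * Q * (T * S) := by rw [hST, hTS, Matrix.one_mul, Matrix.mul_one]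
    _ = S * (T * Q * T) * S := by noncomm_ring
  have hQDdet : QD.det = ∏ i, Q i i := by rw [hQD, Matrix.det_diagonal]
  have hQDdet_pos : 0 < QD.det := by
    rw [hQDdet]; exact Finset.prod_pos fun i _ => hdiag i
  have hdet : Q.det = QD.det * M.det := by
    rw [hQeq, Matrix.det_mul, Matrix.det_mul, hQDdet, hS, Matrix.det_diagonal]
    rw [mul_comm _ M.det, mul_assoc, ← Finset.prod_mul_distrib]
    rw [mul_comm]
    congr 1
    exact Finset.prod_congr rfl fun i _ => (Real.mul_self_sqrt (hdiag i).le)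
  set μ : Fin m → ℝ := hM.eigenvalues with hμdef
  have hμ : ∀ i, lamMin ≤ μ i - 1 ∧ |μ i - 1| ≤ ρ := by
    intro i
    set v : Fin m → ℝ := ⇑(hM.eigenvectorBasis i) with hv
    have hvM : M *ᵥ v = μ i • v := hM.mulVec_eigenvectorBasis i
    have hvne : v ≠ 0 := by
      have := hM.eigenvectorBasis.orthonormal.ne_zero i
      intro h
      apply this
      ext j
      exact congrFun h j
    set w : Fin m → ℝ := T *ᵥ v with hw
    have hwne : w ≠ 0 := by
      intro h
      apply hvne
      have : S *ᵥ w = v := by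
        rw [hw, Matrix.mulVec_mulVec, hST, Matrix.one_mulVec]
      rw [h, Matrix.mulVec_zero] at this
      exact this.symm
    have hAeq : A = T * T * Q - 1 := by
      rw [hA, Matrix.mul_sub, hTT.symm]
      congr 1
      rw [hTT]
      apply Matrix.nonsing_inv_mul
      rw [hQDdet]
      exact isUnit_iff_ne_zero.2 (Finset.prod_pos fun i _ => hdiag i).ne'
    have hAw : A *ᵥ w = (μ i - 1) • w := by
      rw [hAeq, Matrix.sub_mulVec, Matrix.one_mulVec, hw, Matrix.mulVec_mulVec]
      have h1 : T * T * Q * T = T * M := by rw [hMdef]; noncomm_ring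
      rw [h1, ← Matrix.mulVec_mulVec, hvM, Matrix.mulVec_smul, sub_smul, one_smul]
    exact hbounds _ w hwne hAw
  have hμpos : ∀ i, 0 < μ i := fun i => by have := (hμ i).1; linarith
  have hMii : ∀ i, M i i = 1 := by
    intro i
    have h1 : M i i = t i * Q i i * t i := by
      rw [hMdef, hT, Matrix.mul_diagonal, Matrix.diagonal_mul]
    rw [h1]
    have h := Real.mul_self_sqrt (hdiag i).le
    field_simp [ht]
    simp only [ht, inv_pow, Real.sq_sqrt (hdiag i).le]
    exact inv_mul_cancel₀ (hdiag i).ne'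
  have htr : ∑ i, μ i = (m : ℝ) := by
    rw [hμdef, ← il_trace_eq_sum_eigs hM, Matrix.trace]
    simp only [Matrix.diag_apply, hMii]
    simp
  have hdetM : M.det = ∏ i, μ i := by
    have := hM.det_eq_prod_eigenvalues
    simpa using this
  have hsum0 : ∑ i, (μ i - 1) = 0 := by
    rw [Finset.sum_sub_distrib, htr]
    simp
  constructor
  · rw [hdet]
    have hle1 : M.det ≤ 1 := by
      rw [hdetM]
      calc ∏ i, μ i ≤ ∏ i, Real.exp (μ i - 1) := by
            apply Finset.prod_le_prod (fun i _ => (hμpos i).le)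
            intro i _
            have := Real.add_one_le_exp (μ i - 1)
            linarith
      _ = Real.exp (∑ i, (μ i - 1)) := (Real.exp_sum _ _).symm
      _ = 1 := by rw [hsum0, Real.exp_zero]
    nlinarith
  · rw [hdet]
    have hge : Real.exp (-(m : ℝ) * ρ^2 / (1 + lamMin)) ≤ M.det := by
      rw [hdetM]
      have key : ∀ i, Real.exp ((μ i - 1) - ρ^2/(1+lamMin)) ≤ μ i := by
        intro i
        have hlog := il_log_bound ρ lamMin (μ i - 1) (hμ i).1 (hμ i).2 hlamMin
        have h1 : (1 : ℝ) + (μ i - 1) = μ i := by ring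
        rw [h1] at hlog
        calc Real.exp ((μ i - 1) - ρ^2/(1+lamMin)) ≤ Real.exp (Real.log (μ i)) :=
              Real.exp_le_exp.2 hlog
        _ = μ i := Real.exp_log (hμpos i)
      calc Real.exp (-(m : ℝ) * ρ^2 / (1 + lamMin))
          = Real.exp (∑ i, ((μ i - 1) - ρ^2/(1+lamMin))) := by
            congr 1
            rw [Finset.sum_sub_distrib, hsum0, Finset.sum_const, Finset.card_univ,
              Fintype.card_fin]
            push_cast
            ring
      _ = ∏ i, Real.exp ((μ i - 1) - ρ^2/(1+lamMin)) := Real.exp_sum _ _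
      _ ≤ ∏ i, μ i := Finset.prod_le_prod (fun i _ => (Real.exp_pos _).le)
            (fun i _ => key i)
    nlinarith [Real.exp_pos (-(m : ℝ) * ρ^2 / (1 + lamMin))]
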